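/- arXiv:1502.05753 — 3 statements merged into one kernel-verified Lean document; each statement's English description precedes it below -/
import Mathlib

section
/- Let A and B be disjoint sets, ξ, ζ ordinals. Suppose T₀ is a B-tree on A of order ζ, and for each maximal element t of T₀, T_t is a B-tree on B of order ξ. Then T = T₀ ∪ {t⌢s : t ∈ MAX(T₀), s ∈ T_t} is a B-tree on A ∪ B of order ξ + ζ. -/
open Ordinal

/-- `s` is a proper initial segment of `t`. -/
def ProperPrefix {S : Type*} (s t : List S) : Prop := s <+: t ∧ s ≠ t

/-- The maximal elements of a set of finite sequences with respect to the
proper-initial-segment order. -/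
def maxElems {S : Type*} (T : Set (List S)) : Set (List S) :=
  {t ∈ T | ¬ ∃ u ∈ T, ProperPrefix t u}

/-- The derived tree: remove the maximal elements. -/
def derivTree {S : Type*} (T : Set (List S)) : Set (List S) :=
  {t ∈ T | ∃ u ∈ T, ProperPrefix t u}

/-- Transfinite iterates of the derivation: `d^0 T = T`, `d^(ξ+1) T = (d^ξ T)'`,
and intersections at limit stages. -/
noncomputable def derivIter {S : Type*} (T : Set (List S)) (ξ : Ordinal) : Set (List S) :=
  Ordinal.limitRecOn ξ T (fun _ ih => derivTree ih)
    (fun o _ ih => ⋂ (ζ : Set.Iio o), ih ζ.1 ζ.2)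

/-- A tree on `S`: a set of finite sequences closed under initial segments. -/
def IsTree {S : Type*} (T : Set (List S)) : Prop :=
  ∀ ⦃s t : List S⦄, s <+: t → t ∈ T → s ∈ T

/-- A `B`-tree on `S`: a set of nonempty finite sequences which becomes a tree
after adjoining the empty sequence. -/
def IsBTree {S : Type*} (T : Set (List S)) : Prop :=
  [] ∉ T ∧ ∀ ⦃s t : List S⦄, s ≠ [] → s <+: t → t ∈ T → s ∈ T

/-- `T` has order exactly `ξ`: `ξ` is the least ordinal whose derived tree is empty. -/
def hasOrder {S : Type*} (T : Set (List S)) (ξ : Ordinal) : Prop :=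
  derivIter T ξ = ∅ ∧ ∀ ζ < ξ, derivIter T ζ ≠ ∅

lemma derivIter_zero {S : Type*} (T : Set (List S)) : derivIter T 0 = T :=
  Ordinal.limitRecOn_zero _ _ _

lemma derivIter_succ {S : Type*} (T : Set (List S)) (η : Ordinal) :
    derivIter T (Order.succ η) = derivTree (derivIter T η) :=
  Ordinal.limitRecOn_succ _ _ _ _

lemma derivIter_limit {S : Type*} (T : Set (List S)) {η : Ordinal} (h : Order.IsSuccLimit η) :
    derivIter T η = ⋂ (d : Set.Iio η), derivIter T d.1 :=
  Ordinal.limitRecOn_limit _ _ _ _ h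

lemma derivTree_subset {S : Type*} (T : Set (List S)) : derivTree T ⊆ T :=
  fun _ ht => ht.1

lemma derivIter_anti {S : Type*} (T : Set (List S)) :
    ∀ b a, a ≤ b → derivIter T b ⊆ derivIter T a := by
  intro b
  induction b using Ordinal.induction with
  | _ b IH =>
    intro a hab
    rcases eq_or_lt_of_le hab with rfl | h
    · exact subset_rfl
    rcases Ordinal.zero_or_succ_or_isSuccLimit b with rfl | ⟨c, rfl⟩ | hb
    · exact absurd h (not_lt_zero (a := a))
    · rw [derivIter_succ]
      exact (derivTree_subset _).trans (IH c (Order.lt_succ c) a (Order.lt_succ_iff.mp h))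
    · rw [derivIter_limit _ hb]
      exact Set.iInter_subset (fun d : Set.Iio b => derivIter T d.1) ⟨a, h⟩

lemma derivIter_subset {S : Type*} (T : Set (List S)) (b : Ordinal) : derivIter T b ⊆ T := by
  have := derivIter_anti T b 0 (zero_le (a := b))
  rwa [derivIter_zero] at this

lemma derivIter_add {S : Type*} (T : Set (List S)) (a : Ordinal) :
    ∀ b, derivIter T (a + b) = derivIter (derivIter T a) b := by
  intro b
  induction b using Ordinal.induction with
  | _ b IH =>
  rcases Ordinal.zero_or_succ_or_isSuccLimit b with rfl | ⟨c, rfl⟩ | hb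
  · rw [add_zero, derivIter_zero]
  · rw [Ordinal.add_succ, derivIter_succ, derivIter_succ, IH c (Order.lt_succ c)]
  · rw [derivIter_limit _ (Ordinal.isSuccLimit_add a hb), derivIter_limit _ hb]
    ext x
    simp only [Set.mem_iInter]
    constructor
    · intro h d
      rw [← IH d.1 d.2]
      exact h ⟨a + d.1, (add_lt_add_iff_left a).mpr d.2⟩
    · intro h d
      rcases le_or_gt d.1 a with hda | had
      · have := h ⟨0, hb.pos⟩
        rw [← IH 0 hb.pos, add_zero] at this
        exact derivIter_anti T a d.1 hda this
      · have hle : a ≤ d.1 := had.le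
        have hlt : d.1 - a < b := by
          have : a + (d.1 - a) < a + b := by rw [Ordinal.add_sub_cancel_of_le hle]; exact d.2
          exact (add_lt_add_iff_left a).mp this
        have := h ⟨d.1 - a, hlt⟩
        rw [← IH (d.1 - a) hlt, Ordinal.add_sub_cancel_of_le hle] at this
        exact this

lemma exists_maxExt {S : Type*} {T₀ : Set (List S)} {ζ : Ordinal}
    (h : derivIter T₀ ζ = ∅) : ∀ s ∈ T₀, ∃ t ∈ maxElems T₀, s <+: t := by
  intro s hs
  by_contra hno
  push_neg at hno
  have step : ∀ u : List S, u ∈ T₀ ∧ s <+: u →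
      ∃ w, (w ∈ T₀ ∧ s <+: w) ∧ ProperPrefix u w := by
    rintro u ⟨hu, hsu⟩
    have hnm : u ∉ maxElems T₀ := fun hm => hno u hm hsu
    have : ∃ w ∈ T₀, ProperPrefix u w := by
      by_contra hc
      exact hnm ⟨hu, hc⟩
    obtain ⟨w, hw, hpw⟩ := this
    exact ⟨w, ⟨hw, hsu.trans hpw.1⟩, hpw⟩
  choose g hg using step
  let F : {u : List S // u ∈ T₀ ∧ s <+: u} → {u : List S // u ∈ T₀ ∧ s <+: u} :=
    fun u => ⟨g u.1 u.2, (hg u.1 u.2).1⟩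
  let f : ℕ → {u : List S // u ∈ T₀ ∧ s <+: u} :=
    fun n => F^[n] ⟨s, hs, List.prefix_refl s⟩
  have hf : ∀ n, ProperPrefix (f n).1 (f (n+1)).1 := by
    intro n
    have hfn : f (n+1) = F (f n) := Function.iterate_succ_apply' F n _
    rw [hfn]
    exact (hg (f n).1 (f n).2).2
  have mem : ∀ η, ∀ n, (f n).1 ∈ derivIter T₀ η := by
    intro η
    induction η using Ordinal.induction with
    | _ η IH =>
    rcases Ordinal.zero_or_succ_or_isSuccLimit η with rfl | ⟨c, rfl⟩ | hη
    · intro n; rw [derivIter_zero]; exact (f n).2.1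
    · intro n
      rw [derivIter_succ]
      exact ⟨IH c (Order.lt_succ c) n, (f (n+1)).1, IH c (Order.lt_succ c) (n+1), hf n⟩
    · intro n
      rw [derivIter_limit _ hη]
      exact Set.mem_iInter.mpr fun d => IH d.1 d.2 n
  have := mem ζ 0
  rw [h] at this
  exact this

lemma prefix_decomp {S : Type*} {A B : Set S} (hAB : Disjoint A B)
    {t₁ t₂ v₁ v₂ : List S} (ht₁ : ∀ x ∈ t₁, x ∈ A) (ht₂ : ∀ x ∈ t₂, x ∈ A)
    (hv₁ : ∀ x ∈ v₁, x ∈ B) (hv₂ : ∀ x ∈ v₂, x ∈ B)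
    (hv₁ne : v₁ ≠ []) (hv₂ne : v₂ ≠ [])
    (h : t₁ ++ v₁ <+: t₂ ++ v₂) : t₁ = t₂ ∧ v₁ <+: v₂ := by
  have notAB : ∀ x, x ∈ A → x ∈ B → False := fun x hx hy => Set.disjoint_left.mp hAB hx hy
  have ht12 : t₁ <+: t₂ ∨ t₂ <+: t₁ :=
    List.prefix_or_prefix_of_prefix ((List.prefix_append t₁ v₁).trans h)
      (List.prefix_append t₂ v₂)
  have heq : t₁ = t₂ := by
    rcases ht12 with h12 | h21
    · obtain ⟨r, rfl⟩ := h12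
      cases r with
      | nil => rw [List.append_nil]
      | cons b r' =>
        exfalso
        rw [List.append_assoc] at h
        have hpre : v₁ <+: (b :: r') ++ v₂ := (List.prefix_append_right_inj t₁).mp h
        cases v₁ with
        | nil => exact hv₁ne rfl
        | cons a v₁' =>
          obtain ⟨hab, -⟩ := List.cons_prefix_cons.mp hpre
          exact notAB b (ht₂ b (by simp)) (hab ▸ hv₁ a (by simp))
    · obtain ⟨r, rfl⟩ := h21
      cases r with
      | nil => rw [List.append_nil]
      | cons b r' =>
        exfalso
        rw [List.append_assoc] at h
        have hpre : (b :: r') ++ v₁ <+: v₂ := (List.prefix_append_right_inj t₂).mp h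
        cases v₂ with
        | nil => exact hv₂ne rfl
        | cons c v₂' =>
          obtain ⟨hbc, -⟩ := List.cons_prefix_cons.mp hpre
          exact notAB b (ht₁ b (by simp)) (hbc ▸ hv₂ c (by simp))
  subst heq
  exact ⟨rfl, (List.prefix_append_right_inj t₁).mp h⟩

lemma key_lemma {S : Type*} {A B : Set S} (hAB : Disjoint A B) {ξ : Ordinal}
    {T₀ : Set (List S)} {Tt : List S → Set (List S)}
    (hT₀A : ∀ t ∈ T₀, ∀ x ∈ t, x ∈ A)
    (hTt : ∀ t ∈ maxElems T₀, IsBTree (Tt t))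
    (hTtB : ∀ t ∈ maxElems T₀, ∀ u ∈ Tt t, ∀ x ∈ u, x ∈ B)
    (hTtne : ∀ t ∈ maxElems T₀, ∀ η < ξ, derivIter (Tt t) η ≠ ∅)
    (hmax : ∀ s ∈ T₀, ∃ t ∈ maxElems T₀, s <+: t) :
    ∀ η ≤ ξ, derivIter (T₀ ∪ {u | ∃ t ∈ maxElems T₀, ∃ v ∈ Tt t, u = t ++ v}) η
      = T₀ ∪ {u | ∃ t ∈ maxElems T₀, ∃ v ∈ derivIter (Tt t) η, u = t ++ v} := by
  have hMA : ∀ t ∈ maxElems T₀, ∀ x ∈ t, x ∈ A := fun t ht => hT₀A t ht.1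
  have hne : ∀ t ∈ maxElems T₀, ∀ v ∈ Tt t, v ≠ [] := by
    rintro t ht v hv rfl
    exact (hTt t ht).1 hv
  intro η
  induction η using Ordinal.induction with
  | _ η IH =>
  intro hηξ
  rcases Ordinal.zero_or_succ_or_isSuccLimit η with rfl | ⟨c, rfl⟩ | hη
  · rw [derivIter_zero]
    simp only [derivIter_zero]
  · have hc : c < ξ := lt_of_lt_of_le (Order.lt_succ c) hηξ
    rw [derivIter_succ, IH c (Order.lt_succ c) hc.le]
    ext s
    simp only [derivTree, derivIter_succ, Set.mem_union, Set.mem_setOf_eq, Set.mem_sep_iff]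
    constructor
    · rintro ⟨hs, u, hu, hsu⟩
      rcases hs with hs | ⟨t, ht, v, hv, rfl⟩
      · exact Or.inl hs
      · have hvT : v ∈ Tt t := derivIter_subset _ _ hv
        have hvne : v ≠ [] := hne t ht v hvT
        rcases hu with hu | ⟨t', ht', w, hw, rfl⟩
        · exfalso
          have hxB : v.head hvne ∈ B := hTtB t ht v hvT _ (List.head_mem hvne)
          have hxu : v.head hvne ∈ u :=
            hsu.1.subset (List.mem_append_right t (List.head_mem hvne))
          exact Set.disjoint_left.mp hAB (hT₀A u hu _ hxu) hxB
        · have hwT : w ∈ Tt t' := derivIter_subset _ _ hw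
          have hwne : w ≠ [] := hne t' ht' w hwT
          obtain ⟨rfl, hvw⟩ := prefix_decomp hAB (hMA t ht) (hMA t' ht')
            (hTtB t ht v hvT) (hTtB t' ht' w hwT) hvne hwne hsu.1
          refine Or.inr ⟨t, ht, v, ⟨hv, w, hw, hvw, fun hvweq => hsu.2 (by rw [hvweq])⟩, rfl⟩
    · rintro (hs | ⟨t, ht, v, ⟨hv, w, hw, hvw, hvwne⟩, rfl⟩)
      · obtain ⟨t, ht, hst⟩ := hmax s hs
        obtain ⟨v, hv⟩ := Set.nonempty_iff_ne_empty.mpr (hTtne t ht c hc)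
        have hvne : v ≠ [] := hne t ht v (derivIter_subset _ _ hv)
        refine ⟨Or.inl hs, t ++ v, Or.inr ⟨t, ht, v, hv, rfl⟩,
          hst.trans (List.prefix_append t v), fun hstv => ?_⟩
        have h1 : s.length ≤ t.length := hst.length_le
        have h2 : s.length = t.length + v.length := by rw [hstv, List.length_append]
        have : v.length = 0 := by omega
        exact hvne (List.length_eq_zero_iff.mp this)
      · refine ⟨Or.inr ⟨t, ht, v, hv, rfl⟩, t ++ w, Or.inr ⟨t, ht, w, hw, rfl⟩,
          (List.prefix_append_right_inj t).mpr hvw,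
          fun heq => hvwne (List.append_cancel_left heq)⟩
  · rw [derivIter_limit _ hη]
    ext s
    simp only [Set.mem_iInter, Set.mem_union, Set.mem_setOf_eq]
    have hIH : ∀ β (hβ : β < η),
        s ∈ derivIter (T₀ ∪ {u | ∃ t ∈ maxElems T₀, ∃ v ∈ Tt t, u = t ++ v}) β ↔
        (s ∈ T₀ ∨ ∃ t ∈ maxElems T₀, ∃ v ∈ derivIter (Tt t) β, s = t ++ v) := by
      intro β hβ
      rw [IH β hβ (hβ.le.trans hηξ)]
      simp [Set.mem_union]
    constructor
    · intro h
      by_cases hs : s ∈ T₀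
      · exact Or.inl hs
      · have h0 := (hIH 0 hη.pos).mp (h ⟨0, hη.pos⟩)
        rcases h0 with h0 | ⟨t, ht, v, hv0, rfl⟩
        · exact absurd h0 hs
        rw [derivIter_zero] at hv0
        have hvne : v ≠ [] := hne t ht v hv0
        refine Or.inr ⟨t, ht, v, ?_, rfl⟩
        rw [derivIter_limit _ hη]
        refine Set.mem_iInter.mpr fun d => ?_
        have hd := (hIH d.1 d.2).mp (h d)
        rcases hd with hd | ⟨t', ht', w, hw, heq⟩
        · exact absurd hd hs
        · have hwT : w ∈ Tt t' := derivIter_subset _ _ hw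
          have hwne : w ≠ [] := hne t' ht' w hwT
          obtain ⟨rfl, hvw⟩ := prefix_decomp hAB (hMA t ht) (hMA t' ht')
            (hTtB t ht v hv0) (hTtB t' ht' w hwT) hvne hwne ⟨[], by rw [heq, List.append_nil]⟩
          have : v = w := List.append_cancel_left heq
          exact this ▸ hw
    · rintro (hs | ⟨t, ht, v, hv, rfl⟩) d
      · exact (hIH d.1 d.2).mpr (Or.inl hs)
      · refine (hIH d.1 d.2).mpr (Or.inr ⟨t, ht, v, ?_, rfl⟩)
        exact derivIter_anti _ η d.1 d.2.le hv

/-- Placing a `B`-tree of order `ξ` above every maximal node of a `B`-tree of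
order `ζ` (on a disjoint alphabet) gives a `B`-tree of order `ξ + ζ`. -/
theorem order_append_above_max {S : Type*} (A B : Set S) (hAB : Disjoint A B)
    (ξ ζ : Ordinal) (hζ : ζ ≠ 0)
    (T₀ : Set (List S)) (hT₀ : IsBTree T₀) (hT₀A : ∀ t ∈ T₀, ∀ x ∈ t, x ∈ A)
    (hT₀ord : hasOrder T₀ ζ)
    (Tt : List S → Set (List S))
    (hTt : ∀ t ∈ maxElems T₀, IsBTree (Tt t))
    (hTtB : ∀ t ∈ maxElems T₀, ∀ u ∈ Tt t, ∀ x ∈ u, x ∈ B)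
    (hTtord : ∀ t ∈ maxElems T₀, hasOrder (Tt t) ξ) :
    IsBTree (T₀ ∪ {u : List S | ∃ t ∈ maxElems T₀, ∃ v ∈ Tt t, u = t ++ v}) ∧
    (∀ u ∈ T₀ ∪ {u : List S | ∃ t ∈ maxElems T₀, ∃ v ∈ Tt t, u = t ++ v},
      ∀ x ∈ u, x ∈ A ∪ B) ∧
    hasOrder (T₀ ∪ {u : List S | ∃ t ∈ maxElems T₀, ∃ v ∈ Tt t, u = t ++ v}) (ξ + ζ) := by
  set T : Set (List S) := T₀ ∪ {u : List S | ∃ t ∈ maxElems T₀, ∃ v ∈ Tt t, u = t ++ v} with hT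
  have hne : ∀ t ∈ maxElems T₀, ∀ v ∈ Tt t, v ≠ [] := by
    rintro t ht v hv rfl
    exact (hTt t ht).1 hv
  have hmax : ∀ s ∈ T₀, ∃ t ∈ maxElems T₀, s <+: t := exists_maxExt hT₀ord.1
  have key := key_lemma hAB hT₀A hTt hTtB (fun t ht η hη => (hTtord t ht).2 η hη) hmax
  have hT₀ne : T₀ ≠ ∅ := by
    have := hT₀ord.2 0 (pos_iff_ne_zero.mpr hζ)
    rwa [derivIter_zero] at this
  -- derivIter T ξ = T₀
  have hTξ : derivIter T ξ = T₀ := by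
    rw [key ξ le_rfl]
    have : {u : List S | ∃ t ∈ maxElems T₀, ∃ v ∈ derivIter (Tt t) ξ, u = t ++ v} = ∅ := by
      ext u
      simp only [Set.mem_setOf_eq, Set.mem_empty_iff_false, iff_false]
      rintro ⟨t, ht, v, hv, rfl⟩
      rw [(hTtord t ht).1] at hv
      exact hv
    rw [this, Set.union_empty]
  refine ⟨?_, ?_, ?_, ?_⟩
  · constructor
    · rintro (h | ⟨t, ht, v, hv, htv⟩)
      · exact hT₀.1 h
      · obtain ⟨rfl, rfl⟩ := List.append_eq_nil_iff.mp htv.symm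
        exact hT₀.1 ht.1
    · rintro s u hsne hsu (hu | ⟨t, ht, v, hv, rfl⟩)
      · exact Or.inl (hT₀.2 hsne hsu hu)
      · rcases le_or_gt s.length t.length with hlen | hlen
        · have hst : s <+: t := List.prefix_of_prefix_length_le hsu (List.prefix_append t v) hlen
          exact Or.inl (hT₀.2 hsne hst ht.1)
        · have hts : t <+: s :=
            List.prefix_of_prefix_length_le (List.prefix_append t v) hsu hlen.le
          obtain ⟨w, rfl⟩ := hts
          have hwv : w <+: v := (List.prefix_append_right_inj t).mp hsu
          have hwne : w ≠ [] := by
            rintro rfl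
            rw [List.append_nil] at hlen
            exact lt_irrefl _ hlen
          exact Or.inr ⟨t, ht, w, (hTt t ht).2 hwne hwv hv, rfl⟩
  · rintro u (hu | ⟨t, ht, v, hv, rfl⟩) x hx
    · exact Or.inl (hT₀A u hu x hx)
    · rcases List.mem_append.mp hx with hx | hx
      · exact Or.inl (hT₀A t ht.1 x hx)
      · exact Or.inr (hTtB t ht v hv x hx)
  · rw [derivIter_add, hTξ]
    exact hT₀ord.1
  · intro η hη
    rcases le_or_gt η ξ with hηξ | hξη
    · rw [key η hηξ]
      intro hcon
      exact hT₀ne (Set.subset_empty_iff.mp (hcon ▸ Set.subset_union_left))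
    · have hle : ξ ≤ η := hξη.le
      have hδ : η - ξ < ζ := by
        have : ξ + (η - ξ) < ξ + ζ := by
          rw [Ordinal.add_sub_cancel_of_le hle]; exact hη
        exact (add_lt_add_iff_left ξ).mp this
      have : derivIter T η = derivIter T₀ (η - ξ) := by
        conv_lhs => rw [← Ordinal.add_sub_cancel_of_le hle]
        rw [derivIter_add, hTξ]
      rw [this]
      exact hT₀ord.2 _ hδ
end

section
/- Let ξ be a limit ordinal, and suppose for each ζ < ξ there are ordinals ξ_{0,ζ}, ξ_{1,ζ} with ξ_{0,ζ} ⊕ ξ_{1,ζ} = ζ + 1 (Hessenberg sum). Then there exist a set A ⊆ [0,ξ), ordinals ξ_0, ξ_1 with ξ_0 ⊕ ξ_1 = ξ, and j ∈ {0,1} such that ξ_j is a limit ordinal, sup_{ζ∈A} ξ_{j,ζ} = ξ_j, and ξ_{1−j,ζ} ≥ ξ_{1−j} for all ζ ∈ A. -/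
open Ordinal
universe u

namespace Ordinal

/-- Natural (Hessenberg) addition of ordinals, as in the older Mathlib. -/
noncomputable def nadd : Ordinal.{u} → Ordinal.{u} → Ordinal.{u}
  | a, b =>
    max (blsub.{u, u} a fun a' _ => nadd a' b) (blsub.{u, u} b fun b' _ => nadd a b')
termination_by a b => (a, b)
decreasing_by
  · exact Prod.Lex.left _ _ ‹_›
  · exact Prod.Lex.right _ ‹_›

end Ordinal

infixl:65 " ♯ " => Ordinal.nadd

open Order

namespace Ordinal

theorem nadd_def' (a b : Ordinal.{u}) : a ♯ b =
    max (blsub.{u, u} a fun a' _ => a' ♯ b) (blsub.{u, u} b fun b' _ => a ♯ b') := by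
  rw [nadd]

theorem lt_nadd_iff {a b c : Ordinal.{u}} :
    a < b ♯ c ↔ (∃ b' < b, a ≤ b' ♯ c) ∨ ∃ c' < c, a ≤ b ♯ c' := by
  rw [nadd_def']
  simp [lt_max_iff, lt_blsub_iff]

theorem nadd_le_iff {a b c : Ordinal.{u}} :
    b ♯ c ≤ a ↔ (∀ b' < b, b' ♯ c < a) ∧ ∀ c' < c, b ♯ c' < a := by
  rw [nadd_def']
  simp [max_le_iff, blsub_le_iff]

theorem nadd_lt_nadd_left {b c : Ordinal.{u}} (h : b < c) (a : Ordinal.{u}) : a ♯ b < a ♯ c :=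
  lt_nadd_iff.2 (Or.inr ⟨b, h, le_rfl⟩)

theorem nadd_lt_nadd_right {b c : Ordinal.{u}} (h : b < c) (a : Ordinal.{u}) : b ♯ a < c ♯ a :=
  lt_nadd_iff.2 (Or.inl ⟨b, h, le_rfl⟩)

theorem nadd_le_nadd_left {b c : Ordinal.{u}} (h : b ≤ c) (a : Ordinal.{u}) : a ♯ b ≤ a ♯ c := by
  rcases lt_or_eq_of_le h with h | rfl
  · exact (nadd_lt_nadd_left h a).le
  · exact le_rfl

theorem nadd_le_nadd_right {b c : Ordinal.{u}} (h : b ≤ c) (a : Ordinal.{u}) : b ♯ a ≤ c ♯ a := by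
  rcases lt_or_eq_of_le h with h | rfl
  · exact (nadd_lt_nadd_right h a).le
  · exact le_rfl

theorem nadd_comm_le (a b : Ordinal.{u}) : a ♯ b ≤ b ♯ a := by
  induction a using Ordinal.induction generalizing b with
  | h a IHa =>
  induction b using Ordinal.induction with
  | h b IHb =>
  refine nadd_le_iff.2 ⟨fun a' ha' => ?_, fun b' hb' => ?_⟩
  · exact (IHa a' ha' b).trans_lt (nadd_lt_nadd_left ha' b)
  · exact (IHb b' hb').trans_lt (nadd_lt_nadd_right hb' a)

theorem nadd_comm (a b : Ordinal.{u}) : a ♯ b = b ♯ a :=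
  le_antisymm (nadd_comm_le a b) (nadd_comm_le b a)

@[simp]
theorem nadd_zero (a : Ordinal.{u}) : a ♯ 0 = a := by
  induction a using Ordinal.induction with
  | h a IH =>
  apply le_antisymm
  · refine nadd_le_iff.2 ⟨fun a' ha' => ?_, fun c' hc' => absurd hc' (by simp)⟩
    rw [IH a' ha']
    exact ha'
  · exact le_of_forall_lt fun x hx => lt_nadd_iff.2 (Or.inl ⟨x, hx, (IH x hx).ge⟩)

theorem nadd_assoc (a b c : Ordinal.{u}) : a ♯ b ♯ c = a ♯ (b ♯ c) := by
  induction a using Ordinal.induction generalizing b c with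
  | h a IHa =>
  induction b using Ordinal.induction generalizing c with
  | h b IHb =>
  induction c using Ordinal.induction with
  | h c IHc =>
  apply le_antisymm
  · refine nadd_le_iff.2 ⟨fun d hd => ?_, fun c' hc' => ?_⟩
    · rcases lt_nadd_iff.1 hd with ⟨a', ha', hle⟩ | ⟨b', hb', hle⟩
      · calc d ♯ c ≤ a' ♯ b ♯ c := nadd_le_nadd_right hle c
          _ = a' ♯ (b ♯ c) := IHa a' ha' b c
          _ < a ♯ (b ♯ c) := nadd_lt_nadd_right ha' _
      · calc d ♯ c ≤ a ♯ b' ♯ c := nadd_le_nadd_right hle c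
          _ = a ♯ (b' ♯ c) := IHb b' hb' c
          _ < a ♯ (b ♯ c) := nadd_lt_nadd_left (nadd_lt_nadd_right hb' c) a
    · calc a ♯ b ♯ c' = a ♯ (b ♯ c') := IHc c' hc'
        _ < a ♯ (b ♯ c) := nadd_lt_nadd_left (nadd_lt_nadd_left hc' b) a
  · refine nadd_le_iff.2 ⟨fun a' ha' => ?_, fun d hd => ?_⟩
    · calc a' ♯ (b ♯ c) = a' ♯ b ♯ c := (IHa a' ha' b c).symm
        _ < a ♯ b ♯ c := nadd_lt_nadd_right (nadd_lt_nadd_right ha' b) c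
    · rcases lt_nadd_iff.1 hd with ⟨b', hb', hle⟩ | ⟨c', hc', hle⟩
      · calc a ♯ d ≤ a ♯ (b' ♯ c) := nadd_le_nadd_left hle a
          _ = a ♯ b' ♯ c := (IHb b' hb' c).symm
          _ < a ♯ b ♯ c := nadd_lt_nadd_right (nadd_lt_nadd_left hb' a) c
      · calc a ♯ d ≤ a ♯ (b ♯ c') := nadd_le_nadd_left hle a
          _ = a ♯ b ♯ c' := (IHc c' hc').symm
          _ < a ♯ b ♯ c := nadd_lt_nadd_left hc' _

theorem nadd_left_comm (a b c : Ordinal.{u}) : a ♯ (b ♯ c) = b ♯ (a ♯ c) := by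
  rw [← nadd_assoc, nadd_comm a b, nadd_assoc]

theorem nadd_right_comm (a b c : Ordinal.{u}) : a ♯ b ♯ c = a ♯ c ♯ b := by
  rw [nadd_assoc, nadd_comm b c, ← nadd_assoc]

theorem nadd_one (a : Ordinal.{u}) : a ♯ 1 = succ a := by
  induction a using Ordinal.induction with
  | h a IH =>
  apply le_antisymm
  · refine nadd_le_iff.2 ⟨fun a' ha' => ?_, fun c' hc' => ?_⟩
    · rw [IH a' ha']
      exact succ_lt_succ_iff.2 ha'
    · rw [Order.lt_one_iff.1 hc', nadd_zero]
      exact lt_succ a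
  · apply succ_le_of_lt
    have h := nadd_lt_nadd_left (zero_lt_one : (0 : Ordinal.{u}) < 1) a
    rwa [nadd_zero] at h

theorem succ_nadd (a b : Ordinal.{u}) : succ a ♯ b = succ (a ♯ b) := by
  rw [← nadd_one a, nadd_right_comm, nadd_one]

theorem nadd_succ (a b : Ordinal.{u}) : a ♯ succ b = succ (a ♯ b) := by
  rw [← nadd_one (a ♯ b), nadd_assoc, nadd_one]

theorem nadd_nat (a : Ordinal.{u}) (n : ℕ) : a ♯ n = a + n := by
  induction n with
  | zero => simp
  | succ n ih => rw [Nat.cast_succ, add_one_eq_succ, nadd_succ, ih, add_succ]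

theorem nadd_left_cancel {a b c : Ordinal.{u}} (h : a ♯ b = a ♯ c) : b = c := by
  rcases lt_trichotomy b c with h' | h' | h'
  · exact absurd h (nadd_lt_nadd_left h' a).ne
  · exact h'
  · exact absurd h (nadd_lt_nadd_left h' a).ne'

theorem nadd_lt_nadd {a b c d : Ordinal.{u}} (h₁ : a < b) (h₂ : c < d) : a ♯ c < b ♯ d :=
  (nadd_lt_nadd_left h₂ a).trans (nadd_lt_nadd_right h₁ d)

theorem nadd_le_nadd {a b c d : Ordinal.{u}} (h₁ : a ≤ b) (h₂ : c ≤ d) : a ♯ c ≤ b ♯ d :=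
  (nadd_le_nadd_left h₂ a).trans (nadd_le_nadd_right h₁ d)

theorem nadd_lt_nadd_of_lt_of_le {a b c d : Ordinal.{u}} (h₁ : a < b) (h₂ : c ≤ d) :
    a ♯ c < b ♯ d :=
  (nadd_le_nadd_left h₂ a).trans_lt (nadd_lt_nadd_right h₁ d)

theorem le_self_nadd {a b : Ordinal.{u}} : a ≤ a ♯ b := by
  simpa using nadd_le_nadd_left (zero_le : (0 : Ordinal.{u}) ≤ b) a

theorem add_le_nadd (a b : Ordinal.{u}) : a + b ≤ a ♯ b := by
  induction b using Ordinal.limitRecOn with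
  | zero => simp
  | add_one c h =>
    rw [← add_assoc, add_one_eq_succ, add_one_eq_succ, nadd_succ]
    exact succ_le_succ h
  | limit c hc H =>
    exact (add_le_iff_of_isSuccLimit hc).2 fun d hd => (H d hd).trans (nadd_le_nadd_left hd.le a)

end Ordinal


private theorem nadd_add_le (u v w : Ordinal) : (u ♯ v) + w ≤ (u + w) ♯ v := by
  induction w using Ordinal.limitRecOn with
  | zero => simpa using le_self_nadd
  | add_one w ih =>
    rw [← add_assoc, ← add_assoc, add_one_eq_succ, add_one_eq_succ, succ_nadd]
    exact succ_le_succ ih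
  | limit w hw ih =>
    refine (add_le_iff_of_isSuccLimit hw).2 fun w' hw' => ?_
    exact (ih w' hw').trans (nadd_le_nadd_right (add_le_add_right hw'.le u) v)

private theorem nadd_mul_principal {δ : Ordinal}
    (hC : ∀ x < ω ^ δ, ∀ y < ω ^ δ, x ♯ y < ω ^ δ) :
    ∀ q : Ordinal, ∀ t < ω ^ δ, ω ^ δ * q ♯ t = ω ^ δ * q + t := by
  intro q
  induction q using Ordinal.induction with
  | h q IHq =>
  intro t
  induction t using Ordinal.induction with
  | h t IHt =>
  intro ht
  have hw0 : (ω ^ δ : Ordinal) ≠ 0 := opow_ne_zero δ omega0_ne_zero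
  refine le_antisymm (nadd_le_iff.2 ⟨?_, ?_⟩) (add_le_nadd _ _)
  · intro a' ha'
    have hq' : a' / ω ^ δ < q := (div_lt hw0).2 ha'
    have hr : a' % ω ^ δ < ω ^ δ := mod_lt a' hw0
    have ha'eq : ω ^ δ * (a' / ω ^ δ) + a' % ω ^ δ = a' := div_add_mod a' (ω ^ δ)
    calc a' ♯ t = (ω ^ δ * (a' / ω ^ δ) ♯ a' % ω ^ δ) ♯ t := by
          rw [IHq _ hq' _ hr, ha'eq]
      _ = ω ^ δ * (a' / ω ^ δ) ♯ (a' % ω ^ δ ♯ t) := nadd_assoc _ _ _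
      _ = ω ^ δ * (a' / ω ^ δ) + (a' % ω ^ δ ♯ t) := IHq _ hq' _ (hC _ hr _ ht)
      _ < ω ^ δ * (a' / ω ^ δ) + ω ^ δ := add_lt_add_right (hC _ hr _ ht) _
      _ = ω ^ δ * succ (a' / ω ^ δ) := (mul_succ _ _).symm
      _ ≤ ω ^ δ * q := mul_le_mul_right (succ_le_of_lt hq') _
      _ ≤ ω ^ δ * q + t := le_self_add
  · intro t' ht'
    rw [IHt t' ht' (ht'.trans ht)]
    exact add_lt_add_right ht' _

private theorem nadd_mul_mul {δ : Ordinal}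
    (hC : ∀ x < ω ^ δ, ∀ y < ω ^ δ, x ♯ y < ω ^ δ) :
    ∀ q p : Ordinal, ω ^ δ * q ♯ ω ^ δ * p = ω ^ δ * (q ♯ p) := by
  have hw0 : (ω ^ δ : Ordinal) ≠ 0 := opow_ne_zero δ omega0_ne_zero
  intro q
  induction q using Ordinal.induction with
  | h q IHq =>
  intro p
  induction p using Ordinal.induction with
  | h p IHp =>
  have main : ∀ a', a' < ω ^ δ * q → a' ♯ ω ^ δ * p < ω ^ δ * (q ♯ p) := by
    intro a' ha'
    have hq' : a' / ω ^ δ < q := (div_lt hw0).2 ha'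
    have hr : a' % ω ^ δ < ω ^ δ := mod_lt a' hw0
    calc a' ♯ ω ^ δ * p
        = (ω ^ δ * (a' / ω ^ δ) ♯ a' % ω ^ δ) ♯ ω ^ δ * p := by
          rw [nadd_mul_principal hC _ _ hr, div_add_mod]
      _ = (ω ^ δ * (a' / ω ^ δ) ♯ ω ^ δ * p) ♯ a' % ω ^ δ := nadd_right_comm _ _ _
      _ = ω ^ δ * (a' / ω ^ δ ♯ p) ♯ a' % ω ^ δ := by rw [IHq _ hq']
      _ = ω ^ δ * (a' / ω ^ δ ♯ p) + a' % ω ^ δ := nadd_mul_principal hC _ _ hr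
      _ < ω ^ δ * (a' / ω ^ δ ♯ p) + ω ^ δ := add_lt_add_right hr _
      _ = ω ^ δ * succ (a' / ω ^ δ ♯ p) := (mul_succ _ _).symm
      _ ≤ ω ^ δ * (q ♯ p) := mul_le_mul_right (succ_le_of_lt (nadd_lt_nadd_right hq' p)) _
  have main2 : ∀ b', b' < ω ^ δ * p → ω ^ δ * q ♯ b' < ω ^ δ * (q ♯ p) := by
    intro b' hb'
    have hp' : b' / ω ^ δ < p := (div_lt hw0).2 hb'
    have hr : b' % ω ^ δ < ω ^ δ := mod_lt b' hw0
    calc ω ^ δ * q ♯ b'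
        = (ω ^ δ * (b' / ω ^ δ) ♯ b' % ω ^ δ) ♯ ω ^ δ * q := by
          rw [nadd_mul_principal hC _ _ hr, div_add_mod, nadd_comm]
      _ = (ω ^ δ * q ♯ ω ^ δ * (b' / ω ^ δ)) ♯ b' % ω ^ δ := by
          rw [nadd_right_comm, nadd_comm (ω ^ δ * q)]
      _ = ω ^ δ * (q ♯ b' / ω ^ δ) ♯ b' % ω ^ δ := by rw [IHp _ hp']
      _ = ω ^ δ * (q ♯ b' / ω ^ δ) + b' % ω ^ δ := nadd_mul_principal hC _ _ hr
      _ < ω ^ δ * (q ♯ b' / ω ^ δ) + ω ^ δ := add_lt_add_right hr _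
      _ = ω ^ δ * succ (q ♯ b' / ω ^ δ) := (mul_succ _ _).symm
      _ ≤ ω ^ δ * (q ♯ p) := mul_le_mul_right (succ_le_of_lt (nadd_lt_nadd_left hp' q)) _
  refine le_antisymm (nadd_le_iff.2 ⟨main, main2⟩) (le_of_forall_lt fun x hx => ?_)
  have hs : x / ω ^ δ < q ♯ p := (div_lt hw0).2 hx
  have hr : x % ω ^ δ < ω ^ δ := mod_lt x hw0
  have hx2 : x < ω ^ δ * (x / ω ^ δ) + ω ^ δ := by
    conv_lhs => rw [← div_add_mod x (ω ^ δ)]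
    exact add_lt_add_right hr _
  rcases lt_nadd_iff.1 hs with ⟨q', hq', hsle⟩ | ⟨p', hp', hsle⟩
  · calc x < ω ^ δ * (x / ω ^ δ) + ω ^ δ := hx2
      _ ≤ ω ^ δ * (q' ♯ p) + ω ^ δ := add_le_add_left (mul_le_mul_right hsle _) _
      _ = (ω ^ δ * q' ♯ ω ^ δ * p) + ω ^ δ := by rw [IHq _ hq']
      _ ≤ (ω ^ δ * q' + ω ^ δ) ♯ ω ^ δ * p := nadd_add_le _ _ _
      _ = ω ^ δ * succ q' ♯ ω ^ δ * p := by rw [mul_succ]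
      _ ≤ ω ^ δ * q ♯ ω ^ δ * p :=
          nadd_le_nadd_right (mul_le_mul_right (succ_le_of_lt hq') _) _
  · calc x < ω ^ δ * (x / ω ^ δ) + ω ^ δ := hx2
      _ ≤ ω ^ δ * (q ♯ p') + ω ^ δ := add_le_add_left (mul_le_mul_right hsle _) _
      _ = (ω ^ δ * p' ♯ ω ^ δ * q) + ω ^ δ := by rw [← IHp _ hp', nadd_comm (ω ^ δ * q)]
      _ ≤ (ω ^ δ * p' + ω ^ δ) ♯ ω ^ δ * q := nadd_add_le _ _ _
      _ = ω ^ δ * succ p' ♯ ω ^ δ * q := by rw [mul_succ]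
      _ ≤ ω ^ δ * p ♯ ω ^ δ * q :=
          nadd_le_nadd_right (mul_le_mul_right (succ_le_of_lt hp') _) _
      _ = ω ^ δ * q ♯ ω ^ δ * p := nadd_comm _ _

private theorem nadd_principal : ∀ δ : Ordinal, ∀ x < ω ^ δ, ∀ y < ω ^ δ, x ♯ y < ω ^ δ := by
  intro δ
  induction δ using Ordinal.induction with
  | h δ IH =>
  rcases Ordinal.zero_or_succ_or_isSuccLimit δ with rfl | ⟨e, rfl⟩ | hlim
  · intro x hx y hy
    rw [opow_zero] at hx hy ⊢
    rw [lt_one_iff_zero] at hx hy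
    subst hx; subst hy
    simpa using zero_lt_one
  · intro x hx y hy
    have hC := IH e (lt_succ e)
    have hw0 : (ω ^ e : Ordinal) ≠ 0 := opow_ne_zero e omega0_ne_zero
    rw [opow_succ] at hx hy ⊢
    have hxd : x / ω ^ e < ω := (div_lt hw0).2 hx
    have hyd : y / ω ^ e < ω := (div_lt hw0).2 hy
    obtain ⟨m, hm⟩ := lt_omega0.1 hxd
    obtain ⟨n, hn⟩ := lt_omega0.1 hyd
    have hx' : x < ω ^ e * (succ (m : Ordinal)) := by
      conv_lhs => rw [← div_add_mod x (ω ^ e)]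
      rw [mul_succ, hm]
      exact add_lt_add_right (mod_lt x hw0) _
    have hy' : y < ω ^ e * (succ (n : Ordinal)) := by
      conv_lhs => rw [← div_add_mod y (ω ^ e)]
      rw [mul_succ, hn]
      exact add_lt_add_right (mod_lt y hw0) _
    have hlt : x ♯ y < ω ^ e * (succ (m : Ordinal) ♯ succ (n : Ordinal)) := by
      rw [← nadd_mul_mul hC]
      exact nadd_lt_nadd hx' hy'
    have hnat : (succ (m : Ordinal)) ♯ (succ (n : Ordinal)) < ω := by
      have e1 : (succ (m : Ordinal)) = ((m + 1 : ℕ) : Ordinal) := by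
        rw [Nat.cast_add, Nat.cast_one, add_one_eq_succ]
      have e2 : (succ (n : Ordinal)) = ((n + 1 : ℕ) : Ordinal) := by
        rw [Nat.cast_add, Nat.cast_one, add_one_eq_succ]
      rw [e1, e2, nadd_nat, ← Nat.cast_add]
      exact nat_lt_omega0 _
    exact hlt.trans (mul_lt_mul_of_pos_left hnat (opow_pos e omega0_pos))
  · intro x hx y hy
    obtain ⟨e1, he1, hx'⟩ := (lt_opow_of_isSuccLimit omega0_ne_zero hlim).1 hx
    obtain ⟨e2, he2, hy'⟩ := (lt_opow_of_isSuccLimit omega0_ne_zero hlim).1 hy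
    have hm : max e1 e2 < δ := max_lt he1 he2
    have hx2 : x < ω ^ max e1 e2 := hx'.trans_le (opow_le_opow_right omega0_pos (le_max_left _ _))
    have hy2 : y < ω ^ max e1 e2 := hy'.trans_le (opow_le_opow_right omega0_pos (le_max_right _ _))
    exact (IH _ hm x hx2 y hy2).trans_le (opow_le_opow_right omega0_pos hm.le)
private theorem nadd_eq_add_of_dvd {γ h t : Ordinal} (hd : ω ^ γ ∣ h) (ht : t < ω ^ γ) :
    h ♯ t = h + t := by
  obtain ⟨q, rfl⟩ := hd
  exact nadd_mul_principal (nadd_principal γ) q t ht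

private theorem nadd_opow_of_dvd {γ h : Ordinal} (hd : ω ^ γ ∣ h) : h ♯ ω ^ γ = h + ω ^ γ := by
  obtain ⟨q, rfl⟩ := hd
  have h1 := nadd_mul_mul (nadd_principal γ) q 1
  rw [mul_one] at h1
  rw [h1, nadd_one, mul_succ]

private theorem nadd_split {γ H s a b : Ordinal} (hd : ω ^ γ ∣ H) (hs : s < ω ^ γ)
    (hab : a ♯ b = H + s) :
    ∃ h0 h1 t0 t1 : Ordinal, a = h0 + t0 ∧ b = h1 + t1 ∧ h0 ♯ h1 = H ∧ t0 ♯ t1 = s ∧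
      t0 < ω ^ γ ∧ t1 < ω ^ γ ∧ ω ^ γ ∣ h0 ∧ ω ^ γ ∣ h1 := by
  have hw0 : (ω ^ γ : Ordinal) ≠ 0 := opow_ne_zero γ omega0_ne_zero
  have ht0 : a % ω ^ γ < ω ^ γ := mod_lt a hw0
  have ht1 : b % ω ^ γ < ω ^ γ := mod_lt b hw0
  have ha : ω ^ γ * (a / ω ^ γ) + a % ω ^ γ = a := div_add_mod a _
  have hb : ω ^ γ * (b / ω ^ γ) + b % ω ^ γ = b := div_add_mod b _
  have hmul : ω ^ γ * (a / ω ^ γ) ♯ ω ^ γ * (b / ω ^ γ) = ω ^ γ * (a / ω ^ γ ♯ b / ω ^ γ) :=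
    nadd_mul_mul (nadd_principal γ) _ _
  have htt : a % ω ^ γ ♯ b % ω ^ γ < ω ^ γ := nadd_principal γ _ ht0 _ ht1
  have hkey : ω ^ γ * (a / ω ^ γ ♯ b / ω ^ γ) + (a % ω ^ γ ♯ b % ω ^ γ) = H + s := by
    rw [← hab]
    conv_rhs => rw [← ha, ← hb]
    rw [← nadd_eq_add_of_dvd ⟨_, rfl⟩ ht0, ← nadd_eq_add_of_dvd ⟨_, rfl⟩ ht1,
      ← nadd_eq_add_of_dvd ⟨_, rfl⟩ htt, ← hmul]
    rw [nadd_assoc, nadd_assoc, nadd_left_comm (ω ^ γ * (b / ω ^ γ))]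
  obtain ⟨c2, hc2⟩ := hd
  have hq : a / ω ^ γ ♯ b / ω ^ γ = c2 := by
    have hdiv := congrArg (· / ω ^ γ) hkey
    simpa [hc2, mul_add_div _ hw0, div_eq_zero_of_lt htt, div_eq_zero_of_lt hs] using hdiv
  have hts : a % ω ^ γ ♯ b % ω ^ γ = s := by
    apply (add_left_cancel_iff (a := ω ^ γ * c2)).1
    rw [← hq, hkey, hc2, hq]
  exact ⟨_, _, _, _, ha.symm, hb.symm, by rw [hmul, hq, ← hc2], hts, ht0, ht1,
    ⟨_, rfl⟩, ⟨_, rfl⟩⟩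

private theorem nadd_decomp_finite (H : Ordinal) :
    {p : Ordinal × Ordinal | p.1 ♯ p.2 = H}.Finite := by
  by_contra hinf
  have hinf' : {p : Ordinal × Ordinal | p.1 ♯ p.2 = H}.Infinite := hinf
  set S := {p : Ordinal × Ordinal | p.1 ♯ p.2 = H} with hS
  let emb : ℕ ↪ S := hinf'.natEmbedding S
  set f : ℕ → Ordinal := fun n => (emb n).1.1 with hf
  have hfH : ∀ n, f n ♯ (emb n).1.2 = H := fun n => (emb n).2
  have hinj : Function.Injective f := by
    intro m n h
    have h2 : (emb m).1.2 = (emb n).1.2 := by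
      apply nadd_left_cancel (a := f m)
      rw [hfH m]
      conv_rhs => rw [h, hfH n]
    exact emb.injective (Subtype.ext (Prod.ext h h2))
  have hWF : Set.IsWF (Set.range f) :=
    Set.IsWF.mono (Set.isWF_univ_iff.2 inferInstance) (Set.subset_univ _)
  obtain ⟨gm, hgm⟩ := hWF.isPWO.exists_monotone_subseq (f := f) fun n => Set.mem_range_self n
  have hsm : StrictMono (f ∘ gm) := hgm.strictMono_of_injective (hinj.comp gm.injective)
  set bfun : ℕ → Ordinal := fun n => (emb (gm n)).1.2 with hbfun
  have hanti : ∀ n : ℕ, bfun (n + 1) < bfun n := by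
    intro n
    by_contra hle
    push_neg at hle
    have hlt : f (gm n) ♯ bfun n < f (gm (n + 1)) ♯ bfun (n + 1) :=
      nadd_lt_nadd_of_lt_of_le (hsm (Nat.lt_succ_self n)) hle
    rw [hfH, hfH] at hlt
    exact lt_irrefl _ hlt
  obtain ⟨a, ⟨n, rfl⟩, hmin⟩ := wellFounded_lt.has_min (Set.range bfun) ⟨_, 0, rfl⟩
  exact hmin _ ⟨n + 1, rfl⟩ (hanti n)

private theorem exists_tail : ∀ ξ : Ordinal, ξ ≠ 0 →
    ∃ H γ : Ordinal, ω ^ γ ∣ H ∧ ξ = H + ω ^ γ := by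
  intro ξ
  induction ξ using Ordinal.induction with
  | h ξ IH =>
  intro hξ0
  set γ1 := log ω ξ with hγ1
  have hw0 : (ω ^ γ1 : Ordinal) ≠ 0 := opow_ne_zero _ omega0_ne_zero
  have hdm : ω ^ γ1 * (ξ / ω ^ γ1) + ξ % ω ^ γ1 = ξ := div_add_mod ξ _
  rcases eq_or_ne (ξ % ω ^ γ1) 0 with hr | hr
  · obtain ⟨n, hn⟩ := lt_omega0.1 (div_opow_log_lt ξ one_lt_omega0)
    rw [← hγ1] at hn
    match n, hn with
    | 0, hn =>
      exfalso
      apply hξ0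
      rw [← hdm, hr, hn]
      simp
    | m + 1, hn =>
      refine ⟨ω ^ γ1 * m, γ1, dvd_mul_right _ _, ?_⟩
      rw [← hdm, hr, add_zero, hn, Nat.cast_add, Nat.cast_one, add_one_eq_succ, mul_succ]
  · have hrlt : ξ % ω ^ γ1 < ω ^ γ1 := mod_lt ξ hw0
    have hrξ : ξ % ω ^ γ1 < ξ := hrlt.trans_le (opow_log_le_self ω hξ0)
    obtain ⟨H', γ, hdvd, hEq⟩ := IH _ hrξ hr
    have hγγ1 : γ ≤ γ1 := by
      have h1 : (ω ^ γ : Ordinal) ≤ ξ % ω ^ γ1 := by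
        rw [hEq]; exact le_add_self
      exact ((opow_lt_opow_iff_right one_lt_omega0).1 (h1.trans_lt hrlt)).le
    refine ⟨ω ^ γ1 * (ξ / ω ^ γ1) + H', γ, ?_, ?_⟩
    · exact dvd_add ((opow_dvd_opow ω hγγ1).mul_right _) hdvd
    · rw [add_assoc, ← hEq, hdm]

private theorem sSup_image_add {h c : Ordinal} (hc : Order.IsSuccLimit c) {T : Set Ordinal}
    (hT : ∀ t ∈ T, t < c) (hub : ∀ β < c, ∃ t ∈ T, β < t) :
    sSup ((fun t => h + t) '' T) = h + c := by
  have hbdd : BddAbove ((fun t => h + t) '' T) := by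
    refine ⟨h + c, ?_⟩
    rintro y ⟨t, ht, rfl⟩
    exact (add_lt_add_right (hT t ht) h).le
  have hne : T.Nonempty := by
    obtain ⟨t, ht, -⟩ := hub 0 hc.pos
    exact ⟨t, ht⟩
  apply le_antisymm
  · refine csSup_le (hne.image _) ?_
    rintro y ⟨t, ht, rfl⟩
    exact (add_lt_add_right (hT t ht) h).le
  · refine (add_le_iff_of_isSuccLimit hc).2 fun β hβ => ?_
    obtain ⟨t, ht, hβt⟩ := hub β hβ
    exact (add_le_add_right hβt.le h).trans (le_csSup hbdd ⟨t, ht, rfl⟩)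
/-- Splitting technique: if `ξ` is a limit ordinal and for every `ζ < ξ` we have
`ξ_{0,ζ} ⊕ ξ_{1,ζ} = ζ + 1`, then there are `A ⊆ [0,ξ)`, ordinals `ξ_0, ξ_1` with
`ξ_0 ⊕ ξ_1 = ξ` and `j ∈ {0,1}` with `ξ_j` a limit ordinal,
`sup_{ζ∈A} ξ_{j,ζ} = ξ_j` and `ξ_{1−j,ζ} ≥ ξ_{1−j}` for all `ζ ∈ A`. -/
theorem splitting_technique (ξ : Ordinal) (hξ : Order.IsSuccLimit ξ)
    (g : Fin 2 → Ordinal → Ordinal)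
    (hg : ∀ ζ < ξ, g 0 ζ ♯ g 1 ζ = ζ + 1) :
    ∃ (A : Set Ordinal) (x : Fin 2 → Ordinal) (j : Fin 2),
      A ⊆ Set.Iio ξ ∧ x 0 ♯ x 1 = ξ ∧ Order.IsSuccLimit (x j) ∧
      sSup (g j '' A) = x j ∧ ∀ ζ ∈ A, x (1 - j) ≤ g (1 - j) ζ := by
  obtain ⟨H, γ, hdvd, hXi⟩ := exists_tail ξ hξ.pos.ne'
  have hγ0 : γ ≠ 0 := by
    rintro rfl
    rw [opow_zero, add_one_eq_succ] at hXi
    exact not_isSuccLimit_succ H (hXi ▸ hξ)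
  have hwlim : Order.IsSuccLimit (ω ^ γ : Ordinal) := isSuccLimit_opow_left isSuccLimit_omega0 hγ0
  have hwpos : (0 : Ordinal) < ω ^ γ := hwlim.pos
  have key : ∀ η : Ordinal, ∃ h0 h1 t0 t1 : Ordinal, η < ω ^ γ →
      g 0 (H + η) = h0 + t0 ∧ g 1 (H + η) = h1 + t1 ∧ h0 ♯ h1 = H ∧ t0 ♯ t1 = η + 1 ∧
      t0 < ω ^ γ ∧ t1 < ω ^ γ ∧ ω ^ γ ∣ h0 ∧ ω ^ γ ∣ h1 := by
    intro η
    by_cases hη : η < ω ^ γ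
    · have hζ : H + η < ξ := by rw [hXi]; exact add_lt_add_right hη H
      have hsucc : η + 1 < ω ^ γ := by
        rw [add_one_eq_succ]; exact hwlim.succ_lt hη
      have hgg : g 0 (H + η) ♯ g 1 (H + η) = H + (η + 1) := by
        rw [hg _ hζ, add_assoc]
      obtain ⟨h0, h1, t0, t1, ha, hb, hH, hts, ht0, ht1, hd0, hd1⟩ :=
        nadd_split hdvd hsucc hgg
      exact ⟨h0, h1, t0, t1, fun _ => ⟨ha, hb, hH, hts, ht0, ht1, hd0, hd1⟩⟩
    · exact ⟨0, 0, 0, 0, fun h => absurd h hη⟩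
  choose h0f h1f t0f t1f hkey using key
  have pigeon : ∃ p0 p1 : Ordinal, p0 ♯ p1 = H ∧
      ((∀ β < ω ^ γ, ∃ η < ω ^ γ, h0f η = p0 ∧ h1f η = p1 ∧ β < t0f η) ∨
       (∀ β < ω ^ γ, ∃ η < ω ^ γ, h0f η = p0 ∧ h1f η = p1 ∧ β < t1f η)) := by
    by_contra hcon
    push_neg at hcon
    have hcon' : ∀ p : Ordinal × Ordinal, ∃ b0 b1 : Ordinal, p.1 ♯ p.2 = H →
        (b0 < ω ^ γ ∧ ∀ η < ω ^ γ, h0f η = p.1 → h1f η = p.2 → t0f η ≤ b0) ∧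
        (b1 < ω ^ γ ∧ ∀ η < ω ^ γ, h0f η = p.1 → h1f η = p.2 → t1f η ≤ b1) := by
      rintro ⟨p0, p1⟩
      by_cases hp : p0 ♯ p1 = H
      · obtain ⟨⟨b0, hb0w, hb0⟩, ⟨b1, hb1w, hb1⟩⟩ := hcon p0 p1 hp
        exact ⟨b0, b1, fun _ => ⟨⟨hb0w, hb0⟩, ⟨hb1w, hb1⟩⟩⟩
      · exact ⟨0, 0, fun h => absurd h hp⟩
    choose β0 β1 hβ using hcon'
    have hβ0w : ∀ p0 p1 : Ordinal, p0 ♯ p1 = H → β0 (p0, p1) < ω ^ γ :=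
      fun p0 p1 h => ((hβ (p0, p1) h).1).1
    have hβ0b : ∀ p0 p1 : Ordinal, p0 ♯ p1 = H →
        ∀ η < ω ^ γ, h0f η = p0 → h1f η = p1 → t0f η ≤ β0 (p0, p1) :=
      fun p0 p1 h => ((hβ (p0, p1) h).1).2
    have hβ1w : ∀ p0 p1 : Ordinal, p0 ♯ p1 = H → β1 (p0, p1) < ω ^ γ :=
      fun p0 p1 h => ((hβ (p0, p1) h).2).1
    have hβ1b : ∀ p0 p1 : Ordinal, p0 ♯ p1 = H →
        ∀ η < ω ^ γ, h0f η = p0 → h1f η = p1 → t1f η ≤ β1 (p0, p1) :=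
      fun p0 p1 h => ((hβ (p0, p1) h).2).2
    have hPfin : {p : Ordinal × Ordinal | p.1 ♯ p.2 = H}.Finite := nadd_decomp_finite H
    have hPne : {p : Ordinal × Ordinal | p.1 ♯ p.2 = H}.Nonempty := ⟨(H, 0), nadd_zero H⟩
    obtain ⟨pM, hpM, hmax⟩ := Set.Finite.exists_maximalFor
      (fun p : Ordinal × Ordinal => β0 p ♯ β1 p) _ hPfin hPne
    set B := β0 pM ♯ β1 pM with hB
    have hBw : B < ω ^ γ :=
      nadd_principal γ _ (hβ0w pM.1 pM.2 hpM) _ (hβ1w pM.1 pM.2 hpM)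
    obtain ⟨-, -, hH', hts, -, -, -, -⟩ := hkey B hBw
    have hp' : ((h0f B, h1f B) : Ordinal × Ordinal) ∈
        {p : Ordinal × Ordinal | p.1 ♯ p.2 = H} := hH'
    have h0le : t0f B ≤ β0 (h0f B, h1f B) := hβ0b _ _ hH' B hBw rfl rfl
    have h1le : t1f B ≤ β1 (h0f B, h1f B) := hβ1b _ _ hH' B hBw rfl rfl
    have hle : B + 1 ≤ β0 (h0f B, h1f B) ♯ β1 (h0f B, h1f B) := by
      rw [← hts]; exact nadd_le_nadd h0le h1le
    have hback : β0 (h0f B, h1f B) ♯ β1 (h0f B, h1f B) ≤ B := by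
      rcases le_total (β0 (h0f B, h1f B) ♯ β1 (h0f B, h1f B)) B with h | h
      · exact h
      · exact (hmax hp' h).ge
    have : B + 1 ≤ B := hle.trans hback
    rw [add_one_eq_succ] at this
    exact (lt_irrefl B ((lt_succ B).trans_le this))
  obtain ⟨p0, p1, hpH, hcase | hcase⟩ := pigeon
  · -- j = 0 : the 0-side sup is unbounded
    refine ⟨(fun η => H + η) '' {η | η < ω ^ γ ∧ h0f η = p0 ∧ h1f η = p1},
      ![p0 + ω ^ γ, p1], 0, ?_, ?_, ?_, ?_, ?_⟩
    · rintro ζ ⟨η, hη, rfl⟩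
      rw [Set.mem_Iio, hXi]
      exact add_lt_add_right hη.1 H
    · simp only [Matrix.cons_val_zero, Matrix.cons_val_one, Matrix.head_cons]
      obtain ⟨η0, hη0w, he0, he1, -⟩ := hcase 0 hwpos
      obtain ⟨-, -, -, -, -, -, hd0, -⟩ := hkey η0 hη0w
      rw [he0] at hd0
      calc (p0 + ω ^ γ) ♯ p1 = (p0 ♯ ω ^ γ) ♯ p1 := by rw [nadd_opow_of_dvd hd0]
        _ = (p0 ♯ p1) ♯ ω ^ γ := nadd_right_comm _ _ _
        _ = H + ω ^ γ := by rw [hpH, nadd_opow_of_dvd hdvd]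
        _ = ξ := hXi.symm
    · simpa using isSuccLimit_add p0 hwlim
    · simp only [Matrix.cons_val_zero]
      have himg : g 0 '' ((fun η => H + η) '' {η | η < ω ^ γ ∧ h0f η = p0 ∧ h1f η = p1}) =
          (fun t => p0 + t) '' (t0f '' {η | η < ω ^ γ ∧ h0f η = p0 ∧ h1f η = p1}) := by
        rw [Set.image_image, Set.image_image]
        apply Set.image_congr
        intro η hη
        obtain ⟨ha, -, -, -, -, -, -, -⟩ := hkey η hη.1
        rw [ha, hη.2.1]
      rw [himg]
      refine sSup_image_add hwlim ?_ ?_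
      · rintro t ⟨η, hη, rfl⟩
        obtain ⟨-, -, -, -, ht0, -, -, -⟩ := hkey η hη.1
        exact ht0
      · intro β hβ
        obtain ⟨η, hηw, he0, he1, hβt⟩ := hcase β hβ
        exact ⟨t0f η, ⟨η, ⟨hηw, he0, he1⟩, rfl⟩, hβt⟩
    · rintro ζ ⟨η, hη, rfl⟩
      have h10 : (1 - 0 : Fin 2) = 1 := rfl
      rw [h10]
      simp only [Matrix.cons_val_one, Matrix.head_cons]
      obtain ⟨-, hb, -, -, -, -, -, -⟩ := hkey η hη.1
      rw [hb, hη.2.2]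
      exact le_self_add
  · -- j = 1
    refine ⟨(fun η => H + η) '' {η | η < ω ^ γ ∧ h0f η = p0 ∧ h1f η = p1},
      ![p0, p1 + ω ^ γ], 1, ?_, ?_, ?_, ?_, ?_⟩
    · rintro ζ ⟨η, hη, rfl⟩
      rw [Set.mem_Iio, hXi]
      exact add_lt_add_right hη.1 H
    · simp only [Matrix.cons_val_zero, Matrix.cons_val_one, Matrix.head_cons]
      obtain ⟨η0, hη0w, he0, he1, -⟩ := hcase 0 hwpos
      obtain ⟨-, -, -, -, -, -, -, hd1⟩ := hkey η0 hη0w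
      rw [he1] at hd1
      calc p0 ♯ (p1 + ω ^ γ) = p0 ♯ (p1 ♯ ω ^ γ) := by rw [nadd_opow_of_dvd hd1]
        _ = (p0 ♯ p1) ♯ ω ^ γ := (nadd_assoc _ _ _).symm
        _ = H + ω ^ γ := by rw [hpH, nadd_opow_of_dvd hdvd]
        _ = ξ := hXi.symm
    · simpa using isSuccLimit_add p1 hwlim
    · simp only [Matrix.cons_val_one, Matrix.head_cons]
      have himg : g 1 '' ((fun η => H + η) '' {η | η < ω ^ γ ∧ h0f η = p0 ∧ h1f η = p1}) =
          (fun t => p1 + t) '' (t1f '' {η | η < ω ^ γ ∧ h0f η = p0 ∧ h1f η = p1}) := by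
        rw [Set.image_image, Set.image_image]
        apply Set.image_congr
        intro η hη
        obtain ⟨-, hb, -, -, -, -, -, -⟩ := hkey η hη.1
        rw [hb, hη.2.2]
      rw [himg]
      refine sSup_image_add hwlim ?_ ?_
      · rintro t ⟨η, hη, rfl⟩
        obtain ⟨-, -, -, -, -, ht1, -, -⟩ := hkey η hη.1
        exact ht1
      · intro β hβ
        obtain ⟨η, hηw, he0, he1, hβt⟩ := hcase β hβ
        exact ⟨t1f η, ⟨η, ⟨hηw, he0, he1⟩, rfl⟩, hβt⟩
    · rintro ζ ⟨η, hη, rfl⟩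
      have h11 : (1 - 1 : Fin 2) = 0 := rfl
      rw [h11]
      simp only [Matrix.cons_val_zero]
      obtain ⟨ha, -, -, -, -, -, -, -⟩ := hkey η hη.1
      rw [ha, hη.2.1]
      exact le_self_add
end

section
/- For every ordinal ξ ≥ 1, if the maximal elements of the minimal tree 𝒯_ξ are partitioned (or covered) by two sets 𝒞^0 ∪ 𝒞^1 = MAX(𝒯_ξ), then there exist j ∈ {0,1}, an order preserving map i : 𝒯_ξ → 𝒯_ξ, and a map e : MAX(𝒯_ξ) → MAX(𝒯_ξ) with i(t) ⪯ e(t) for all maximal t, such that e(MAX(𝒯_ξ)) ⊆ 𝒞^j. -/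
open Ordinal

/-- The minimal trees: `𝒯_0 = ∅`, `𝒯_(ξ+1) = {(ξ+1)} ∪ {(ξ+1)⌢t : t ∈ 𝒯_ξ}`,
and `𝒯_λ = ⋃_(ζ<λ) 𝒯_(ζ+1)` at limits. -/
noncomputable def minTree (ξ : Ordinal) : Set (List Ordinal) :=
  Ordinal.limitRecOn ξ ∅
    (fun ζ ih => {l : List Ordinal | l = [Order.succ ζ] ∨ ∃ t ∈ ih, l = Order.succ ζ :: t})
    (fun o ho ih => ⋃ (ζ : Set.Iio o), ih (Order.succ ζ.1) (ho.succ_lt ζ.2))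

namespace MinTreeAux

lemma fin2 (a : Fin 2) : a = 0 ∨ a = 1 := match a with | 0 => Or.inl rfl | 1 => Or.inr rfl

lemma pp_cons {a : Ordinal} {s t : List Ordinal} (h : ProperPrefix s t) :
    ProperPrefix (a :: s) (a :: t) :=
  ⟨List.cons_prefix_cons.mpr ⟨rfl, h.1⟩, fun he => h.2 (by injection he)⟩

lemma minTree_zero : minTree 0 = ∅ := Ordinal.limitRecOn_zero ..

lemma minTree_succ (ζ : Ordinal) : minTree (Order.succ ζ) =
    {l : List Ordinal | l = [Order.succ ζ] ∨ ∃ t ∈ minTree ζ, l = Order.succ ζ :: t} :=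
  Ordinal.limitRecOn_succ ..

lemma minTree_limit {o : Ordinal} (ho : Order.IsSuccLimit o) :
    minTree o = ⋃ (ζ : Set.Iio o), minTree (Order.succ ζ.1) :=
  Ordinal.limitRecOn_limit _ _ _ _ ho

lemma mem_limit_iff {o : Ordinal} (ho : Order.IsSuccLimit o) {l : List Ordinal} :
    l ∈ minTree o ↔ ∃ ζ < o, l ∈ minTree (Order.succ ζ) := by
  rw [minTree_limit ho]
  simp [Set.mem_iUnion, Subtype.exists]

lemma singleton_mem (ζ : Ordinal) : [Order.succ ζ] ∈ minTree (Order.succ ζ) := by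
  rw [minTree_succ]; exact Or.inl rfl

lemma cons_mem {ζ : Ordinal} {t : List Ordinal} (h : t ∈ minTree ζ) :
    Order.succ ζ :: t ∈ minTree (Order.succ ζ) := by
  rw [minTree_succ]; exact Or.inr ⟨t, h, rfl⟩

lemma mem_succ_elim {ζ : Ordinal} {l : List Ordinal} (h : l ∈ minTree (Order.succ ζ)) :
    l = [Order.succ ζ] ∨ ∃ t ∈ minTree ζ, l = Order.succ ζ :: t := by
  rwa [minTree_succ] at h

lemma exists_cons_of_mem_succ {ζ : Ordinal} {l : List Ordinal}
    (h : l ∈ minTree (Order.succ ζ)) : ∃ t, l = Order.succ ζ :: t := by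
  rcases mem_succ_elim h with h | ⟨t, _, h⟩
  exacts [⟨[], h⟩, ⟨t, h⟩]

lemma ne_nil {ξ : Ordinal} {l : List Ordinal} (h : l ∈ minTree ξ) : l ≠ [] := by
  rcases Ordinal.zero_or_succ_or_isSuccLimit ξ with rfl | ⟨ζ, rfl⟩ | ho
  · rw [minTree_zero] at h; exact absurd h (Set.notMem_empty _)
  · obtain ⟨t, rfl⟩ := exists_cons_of_mem_succ h; simp
  · rw [mem_limit_iff ho] at h
    obtain ⟨ζ, _, h⟩ := h
    obtain ⟨t, rfl⟩ := exists_cons_of_mem_succ h; simp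

lemma comp_eq {ζ η : Ordinal} {s t : List Ordinal} (hs : s ∈ minTree (Order.succ ζ))
    (ht : t ∈ minTree (Order.succ η)) (hst : s <+: t) : ζ = η := by
  obtain ⟨s', rfl⟩ := exists_cons_of_mem_succ hs
  obtain ⟨t', rfl⟩ := exists_cons_of_mem_succ ht
  exact Order.succ_injective (List.cons_prefix_cons.mp hst).1

lemma succ_subset_limit {ζ o : Ordinal} (ho : Order.IsSuccLimit o) (h : ζ < o) :
    minTree (Order.succ ζ) ⊆ minTree o := fun _ hl => (mem_limit_iff ho).mpr ⟨ζ, h, hl⟩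

lemma mem_maxElems {T : Set (List Ordinal)} {t : List Ordinal} :
    t ∈ maxElems T ↔ t ∈ T ∧ ∀ u ∈ T, ¬ ProperPrefix t u := by
  simp [maxElems]

lemma mem_maxElems_succ {ζ : Ordinal} {m : List Ordinal} :
    m ∈ maxElems (minTree (Order.succ ζ)) ↔
      (m = [Order.succ ζ] ∧ minTree ζ = ∅) ∨
      ∃ m' ∈ maxElems (minTree ζ), m = Order.succ ζ :: m' := by
  constructor
  · intro hm
    obtain ⟨hmem, hmax⟩ := mem_maxElems.mp hm
    rcases mem_succ_elim hmem with rfl | ⟨t, ht, rfl⟩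
    · left; refine ⟨rfl, ?_⟩
      by_contra hne
      obtain ⟨s, hs⟩ := Set.nonempty_iff_ne_empty.mpr hne
      refine hmax _ (cons_mem hs) ⟨List.cons_prefix_cons.mpr ⟨rfl, List.nil_prefix⟩, fun he => ?_⟩
      injection he with _ h2
      exact ne_nil hs h2.symm
    · right; refine ⟨t, ?_, rfl⟩
      exact mem_maxElems.mpr ⟨ht, fun u hu hpp => hmax _ (cons_mem hu) (pp_cons hpp)⟩
  · rintro (⟨rfl, hempty⟩ | ⟨m', hm', rfl⟩)
    · refine mem_maxElems.mpr ⟨singleton_mem ζ, fun u hu hpp => ?_⟩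
      rcases mem_succ_elim hu with rfl | ⟨t, ht, rfl⟩
      · exact hpp.2 rfl
      · rw [hempty] at ht; exact ht.elim
    · obtain ⟨hm'1, hm'2⟩ := mem_maxElems.mp hm'
      refine mem_maxElems.mpr ⟨cons_mem hm'1, fun u hu hpp => ?_⟩
      rcases mem_succ_elim hu with rfl | ⟨t, ht, rfl⟩
      · obtain ⟨-, h2⟩ := List.cons_prefix_cons.mp hpp.1
        exact ne_nil hm'1 (List.prefix_nil.mp h2)
      · obtain ⟨-, h2⟩ := List.cons_prefix_cons.mp hpp.1
        exact hm'2 t ht ⟨h2, fun he => hpp.2 (by rw [he])⟩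

lemma mem_maxElems_limit {o : Ordinal} (ho : Order.IsSuccLimit o) {m : List Ordinal} :
    m ∈ maxElems (minTree o) ↔ ∃ ζ < o, m ∈ maxElems (minTree (Order.succ ζ)) := by
  constructor
  · intro hm
    obtain ⟨hmem, hmax⟩ := mem_maxElems.mp hm
    obtain ⟨ζ, hζ, hmem'⟩ := (mem_limit_iff ho).mp hmem
    exact ⟨ζ, hζ, mem_maxElems.mpr
      ⟨hmem', fun u hu hpp => hmax u (succ_subset_limit ho hζ hu) hpp⟩⟩
  · rintro ⟨ζ, hζ, hm⟩
    obtain ⟨hmem, hmax⟩ := mem_maxElems.mp hm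
    refine mem_maxElems.mpr ⟨succ_subset_limit ho hζ hmem, fun u hu hpp => ?_⟩
    obtain ⟨η, hη, hu'⟩ := (mem_limit_iff ho).mp hu
    obtain rfl := comp_eq hmem hu' hpp.1
    exact hmax u hu' hpp

lemma exists_max_ext : ∀ ξ : Ordinal, ∀ t ∈ minTree ξ,
    ∃ m ∈ maxElems (minTree ξ), t <+: m := by
  intro ξ
  induction ξ using Ordinal.induction with
  | h ξ IH =>
  rcases Ordinal.zero_or_succ_or_isSuccLimit ξ with rfl | ⟨ζ, rfl⟩ | ho
  · intro t ht; rw [minTree_zero] at ht; exact ht.elim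
  · intro t ht
    rcases mem_succ_elim ht with rfl | ⟨t', ht', rfl⟩
    · by_cases hE : minTree ζ = ∅
      · exact ⟨_, mem_maxElems_succ.mpr (Or.inl ⟨rfl, hE⟩), List.prefix_refl _⟩
      · obtain ⟨s, hs⟩ := Set.nonempty_iff_ne_empty.mpr hE
        obtain ⟨m, hm, -⟩ := IH ζ (Order.lt_succ ζ) s hs
        exact ⟨Order.succ ζ :: m, mem_maxElems_succ.mpr (Or.inr ⟨m, hm, rfl⟩),
          List.cons_prefix_cons.mpr ⟨rfl, List.nil_prefix⟩⟩
    · obtain ⟨m, hm, htm⟩ := IH ζ (Order.lt_succ ζ) t' ht'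
      exact ⟨Order.succ ζ :: m, mem_maxElems_succ.mpr (Or.inr ⟨m, hm, rfl⟩),
        List.cons_prefix_cons.mpr ⟨rfl, htm⟩⟩
  · intro t ht
    obtain ⟨ζ, hζ, ht'⟩ := (mem_limit_iff ho).mp ht
    obtain ⟨m, hm, htm⟩ := IH (Order.succ ζ) (ho.succ_lt hζ) t ht'
    exact ⟨m, (mem_maxElems_limit ho).mpr ⟨ζ, hζ, hm⟩, htm⟩

lemma exists_embed : ∀ β α : Ordinal, α ≤ β → ∃ u : List Ordinal → List Ordinal,
    (∀ t ∈ minTree α, u t ∈ minTree β) ∧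
    (∀ s ∈ minTree α, ∀ t ∈ minTree α, ProperPrefix s t → ProperPrefix (u s) (u t)) := by
  intro β
  induction β using Ordinal.induction with
  | h β IH =>
  intro α hα
  rcases eq_or_lt_of_le hα with rfl | hlt
  · exact ⟨id, fun t ht => ht, fun s _ t _ h => h⟩
  rcases Ordinal.zero_or_succ_or_isSuccLimit β with rfl | ⟨η, rfl⟩ | ho
  · exact absurd hlt (not_lt_of_ge (zero_le (a := α)))
  · obtain ⟨u₀, hu₀, hmono⟩ := IH η (Order.lt_succ η) α (Order.lt_succ_iff.mp hlt)
    exact ⟨fun l => Order.succ η :: u₀ l, fun t ht => cons_mem (hu₀ t ht),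
      fun s hs t ht h => pp_cons (hmono s hs t ht h)⟩
  · exact ⟨fun l => Order.succ α :: l,
      fun t ht => succ_subset_limit ho hlt (cons_mem ht),
      fun s _ t _ h => pp_cons h⟩

lemma main : ∀ ξ : Ordinal, ∀ C : Fin 2 → Set (List Ordinal),
    maxElems (minTree ξ) ⊆ C 0 ∪ C 1 →
    ∃ (j : Fin 2) (i e : List Ordinal → List Ordinal),
      (∀ t ∈ minTree ξ, i t ∈ minTree ξ) ∧
      (∀ s ∈ minTree ξ, ∀ t ∈ minTree ξ, ProperPrefix s t → ProperPrefix (i s) (i t)) ∧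
      (∀ t ∈ maxElems (minTree ξ),
        e t ∈ maxElems (minTree ξ) ∧ i t <+: e t ∧ e t ∈ C j) := by
  intro ξ
  induction ξ using Ordinal.induction with
  | h ξ IH =>
  intro C hC
  rcases Ordinal.zero_or_succ_or_isSuccLimit ξ with rfl | ⟨ζ, rfl⟩ | ho
  · refine ⟨0, id, id, fun t ht => ht, fun s _ t _ h => h, fun t ht => ?_⟩
    rw [minTree_zero] at ht
    exact absurd (mem_maxElems.mp ht).1 (Set.notMem_empty t)
  · -- successor case
    by_cases hE : minTree ζ = ∅
    · have hmax : [Order.succ ζ] ∈ maxElems (minTree (Order.succ ζ)) :=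
        mem_maxElems_succ.mpr (Or.inl ⟨rfl, hE⟩)
      have hj : ∃ j : Fin 2, [Order.succ ζ] ∈ C j := by
        rcases hC hmax with h | h
        exacts [⟨0, h⟩, ⟨1, h⟩]
      obtain ⟨j, hj⟩ := hj
      refine ⟨j, id, id, fun t ht => ht, fun s _ t _ h => h, fun t ht => ?_⟩
      rcases mem_maxElems_succ.mp ht with ⟨rfl, -⟩ | ⟨m', hm', rfl⟩
      · exact ⟨ht, List.prefix_refl _, hj⟩
      · rw [hE] at hm'
        exact absurd (mem_maxElems.mp hm').1 (Set.notMem_empty m')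
    · set D : Fin 2 → Set (List Ordinal) := fun k => {t | Order.succ ζ :: t ∈ C k} with hD
      have hDcov : maxElems (minTree ζ) ⊆ D 0 ∪ D 1 := fun t ht =>
        hC (mem_maxElems_succ.mpr (Or.inr ⟨t, ht, rfl⟩))
      obtain ⟨j, i₀, e₀, hi₀mem, hi₀mono, he₀⟩ := IH ζ (Order.lt_succ ζ) D hDcov
      refine ⟨j, fun l => l.headI :: (if l.tail = [] then [] else i₀ l.tail),
        fun l => l.headI :: e₀ l.tail, ?_, ?_, ?_⟩
      · intro t ht
        rcases mem_succ_elim ht with rfl | ⟨t', ht', rfl⟩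
        · simpa using singleton_mem ζ
        · simp only [List.headI, List.tail_cons, ne_nil ht', if_false]
          exact cons_mem (hi₀mem t' ht')
      · intro s hs t ht hpp
        rcases mem_succ_elim hs with rfl | ⟨s', hs', rfl⟩ <;>
          rcases mem_succ_elim ht with rfl | ⟨t', ht', rfl⟩
        · exact absurd rfl hpp.2
        · simp only [List.headI, List.tail_cons, if_pos rfl, if_true, ne_nil ht', if_false]
          refine ⟨List.cons_prefix_cons.mpr ⟨rfl, List.nil_prefix⟩, fun he => ?_⟩
          injection he with _ h2
          exact ne_nil (hi₀mem t' ht') h2.symm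
        · obtain ⟨-, h2⟩ := List.cons_prefix_cons.mp hpp.1
          exact absurd (List.prefix_nil.mp h2) (ne_nil hs')
        · obtain ⟨-, h2⟩ := List.cons_prefix_cons.mp hpp.1
          have hne : s' ≠ t' := fun he => hpp.2 (by rw [he])
          simp only [List.headI, List.tail_cons, ne_nil hs', if_false, ne_nil ht', if_false]
          exact pp_cons (hi₀mono s' hs' t' ht' ⟨h2, hne⟩)
      · intro t ht
        rcases mem_maxElems_succ.mp ht with ⟨rfl, hE'⟩ | ⟨m', hm', rfl⟩
        · exact absurd hE' hE
        · obtain ⟨hmem, hpre, hcol⟩ := he₀ m' hm'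
          have hm'1 := (mem_maxElems.mp hm').1
          simp only [List.headI, List.tail_cons, ne_nil hm'1, if_false]
          exact ⟨mem_maxElems_succ.mpr (Or.inr ⟨e₀ m', hmem, rfl⟩),
            List.cons_prefix_cons.mpr ⟨rfl, hpre⟩, hcol⟩
  · -- limit case
    have key : ∀ ζ : Ordinal, ∃ (j : Fin 2) (i e : List Ordinal → List Ordinal),
        ζ < ξ →
        (∀ t ∈ minTree (Order.succ ζ), i t ∈ minTree (Order.succ ζ)) ∧
        (∀ s ∈ minTree (Order.succ ζ), ∀ t ∈ minTree (Order.succ ζ),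
          ProperPrefix s t → ProperPrefix (i s) (i t)) ∧
        (∀ t ∈ maxElems (minTree (Order.succ ζ)),
          e t ∈ maxElems (minTree (Order.succ ζ)) ∧ i t <+: e t ∧ e t ∈ C j) := by
      intro ζ
      by_cases hζ : ζ < ξ
      · have hsub : maxElems (minTree (Order.succ ζ)) ⊆ C 0 ∪ C 1 := fun m hm =>
          hC ((mem_maxElems_limit ho).mpr ⟨ζ, hζ, hm⟩)
        obtain ⟨j, i, e, h1, h2, h3⟩ := IH (Order.succ ζ) (ho.succ_lt hζ) C hsub
        exact ⟨j, i, e, fun _ => ⟨h1, h2, h3⟩⟩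
      · exact ⟨0, id, id, fun h => absurd h hζ⟩
    choose J I E hJIE using key
    have hcof : ∃ j : Fin 2, ∀ ζ < ξ, ∃ ζ', ζ ≤ ζ' ∧ ζ' < ξ ∧ J ζ' = j := by
      by_contra hcon
      push_neg at hcon
      obtain ⟨ζ₀, hζ₀, h0⟩ := hcon 0
      obtain ⟨ζ₁, hζ₁, h1⟩ := hcon 1
      have hζm : max ζ₀ ζ₁ < ξ := max_lt hζ₀ hζ₁
      rcases fin2 (J (max ζ₀ ζ₁)) with h | h
      · exact h0 _ (le_max_left _ _) hζm h
      · exact h1 _ (le_max_right _ _) hζm h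
    obtain ⟨j, hj⟩ := hcof
    have hf' : ∀ ζ : Ordinal, ∃ ζ', ζ < ξ → ζ ≤ ζ' ∧ ζ' < ξ ∧ J ζ' = j := by
      intro ζ
      by_cases hζ : ζ < ξ
      · obtain ⟨ζ', h⟩ := hj ζ hζ; exact ⟨ζ', fun _ => h⟩
      · exact ⟨0, fun h => absurd h hζ⟩
    choose f hf using hf'
    have hu' : ∀ ζ : Ordinal, ∃ u : List Ordinal → List Ordinal, ζ < ξ →
        (∀ t ∈ minTree (Order.succ ζ), u t ∈ minTree (Order.succ (f ζ))) ∧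
        (∀ s ∈ minTree (Order.succ ζ), ∀ t ∈ minTree (Order.succ ζ),
          ProperPrefix s t → ProperPrefix (u s) (u t)) := by
      intro ζ
      by_cases hζ : ζ < ξ
      · obtain ⟨u, h1, h2⟩ := exists_embed (Order.succ (f ζ)) (Order.succ ζ)
          (Order.succ_le_succ (hf ζ hζ).1)
        exact ⟨u, fun _ => ⟨h1, h2⟩⟩
      · exact ⟨id, fun h => absurd h hζ⟩
    choose U hU using hu'
    have hcomp' : ∀ l : List Ordinal, ∃ ζ : Ordinal, l ∈ minTree ξ →
        ζ < ξ ∧ l ∈ minTree (Order.succ ζ) := by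
      intro l
      by_cases hl : l ∈ minTree ξ
      · obtain ⟨ζ, hζ, h⟩ := (mem_limit_iff ho).mp hl
        exact ⟨ζ, fun _ => ⟨hζ, h⟩⟩
      · exact ⟨0, fun h => absurd h hl⟩
    choose comp hcomp using hcomp'
    have hM' : ∀ l : List Ordinal, ∃ m : List Ordinal, l ∈ minTree ξ →
        m ∈ maxElems (minTree (Order.succ (f (comp l)))) ∧ U (comp l) l <+: m := by
      intro l
      by_cases hl : l ∈ minTree ξ
      · obtain ⟨hcl, hmem⟩ := hcomp l hl
        have hUl : U (comp l) l ∈ minTree (Order.succ (f (comp l))) :=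
          (hU (comp l) hcl).1 l hmem
        obtain ⟨m, hm, hlm⟩ := exists_max_ext _ _ hUl
        exact ⟨m, fun _ => ⟨hm, hlm⟩⟩
      · exact ⟨[], fun h => absurd h hl⟩
    choose M hM using hM'
    refine ⟨j, fun l => I (f (comp l)) (U (comp l) l), fun l => E (f (comp l)) (M l),
      ?_, ?_, ?_⟩
    · intro t ht
      obtain ⟨hc, hmem⟩ := hcomp t ht
      have hfc := hf (comp t) hc
      have hUt := (hU (comp t) hc).1 t hmem
      exact succ_subset_limit ho hfc.2.1 ((hJIE (f (comp t)) hfc.2.1).1 _ hUt)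
    · intro s hs t ht hpp
      obtain ⟨hcs, hmems⟩ := hcomp s hs
      obtain ⟨hct, hmemt⟩ := hcomp t ht
      have hceq : comp s = comp t := comp_eq hmems hmemt hpp.1
      show ProperPrefix (I (f (comp s)) (U (comp s) s)) (I (f (comp t)) (U (comp t) t))
      rw [hceq] at hmems ⊢
      have hU' := hU (comp t) hct
      have hfc := hf (comp t) hct
      exact (hJIE (f (comp t)) hfc.2.1).2.1 _ (hU'.1 s hmems) _ (hU'.1 t hmemt)
        (hU'.2 s hmems t hmemt hpp)
    · intro t ht
      have htT : t ∈ minTree ξ := (mem_maxElems.mp ht).1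
      obtain ⟨hc, hmem⟩ := hcomp t htT
      obtain ⟨hMmax, hMpre⟩ := hM t htT
      have hfc := hf (comp t) hc
      obtain ⟨hE1, hE2, hE3⟩ := (hJIE (f (comp t)) hfc.2.1).2.2 (M t) hMmax
      refine ⟨(mem_maxElems_limit ho).mpr ⟨f (comp t), hfc.2.1, hE1⟩, ?_, hfc.2.2 ▸ hE3⟩
      show I (f (comp t)) (U (comp t) t) <+: E (f (comp t)) (M t)
      rcases eq_or_ne (U (comp t) t) (M t) with heq | hne
      · rw [heq]; exact hE2
      · have hUt := (hU (comp t) hc).1 t hmem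
        have hMmem : M t ∈ minTree (Order.succ (f (comp t))) := (mem_maxElems.mp hMmax).1
        exact ((hJIE (f (comp t)) hfc.2.1).2.1 _ hUt _ hMmem ⟨hMpre, hne⟩).1.trans hE2

end MinTreeAux

/-- If the maximal elements of `𝒯_ξ` (`ξ ≥ 1`) are covered by two colors, then there
is an extended order preserving map `(i, e)` of `𝒯_ξ` into itself with
`e(MAX(𝒯_ξ))` monochromatic. -/
theorem minTree_max_coloring (ξ : Ordinal) (hξ : 1 ≤ ξ)
    (C : Fin 2 → Set (List Ordinal))
    (hC : maxElems (minTree ξ) = C 0 ∪ C 1) :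
    ∃ (j : Fin 2) (i e : List Ordinal → List Ordinal),
      (∀ t ∈ minTree ξ, i t ∈ minTree ξ) ∧
      (∀ s ∈ minTree ξ, ∀ t ∈ minTree ξ, ProperPrefix s t → ProperPrefix (i s) (i t)) ∧
      (∀ t ∈ maxElems (minTree ξ),
        e t ∈ maxElems (minTree ξ) ∧ i t <+: e t ∧ e t ∈ C j) :=
  MinTreeAux.main ξ C hC.le
end
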